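/- For any chordal graph G, the following assertions are equivalent: (i) G is α⁻-stable; (ii) G has a stability system which is a 2-dominating set of G; (iii) G has a unique stability system. -/

import Mathlib

open Finset

variable {V : Type*}

/-- A stable (independent) set of vertices of `G`. -/
def IsStableSet (G : SimpleGraph V) (S : Finset V) : Prop :=
  ∀ u ∈ S, ∀ v ∈ S, ¬ G.Adj u v

/-- The stability number `α(G)`: the maximum cardinality of a stable set. -/
noncomputable def stabNum (G : SimpleGraph V) [Fintype V] : ℕ :=
  sSup {n : ℕ | ∃ S : Finset V, IsStableSet G S ∧ S.card = n}

/-- A stability system of `G`: a stable set of maximum cardinality. -/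
def IsStabSystem (G : SimpleGraph V) [Fintype V] (S : Finset V) : Prop :=
  IsStableSet G S ∧ S.card = stabNum G

/-- `G` is α⁻-stable: deleting any edge leaves the stability number unchanged. -/
def AlphaMinusStable (G : SimpleGraph V) [Fintype V] : Prop :=
  ∀ u v : V, G.Adj u v → stabNum (G.deleteEdges {s(u, v)}) = stabNum G

/-- `G` is α⁺-stable: adding any edge of the complement leaves the stability
number unchanged. -/
def AlphaPlusStable (G : SimpleGraph V) [Fintype V] : Prop :=
  ∀ u v : V, u ≠ v → ¬ G.Adj u v →
    stabNum (G ⊔ SimpleGraph.fromEdgeSet {s(u, v)}) = stabNum G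

/-- A matching of `G`, viewed as a set of pairwise non-incident edges. -/
def IsMatchingSet (G : SimpleGraph V) (M : Finset (Sym2 V)) : Prop :=
  (↑M : Set (Sym2 V)) ⊆ G.edgeSet ∧
    ∀ e ∈ M, ∀ f ∈ M, e ≠ f → ∀ v : V, ¬ (v ∈ e ∧ v ∈ f)

/-- The matching number `μ(G)`. -/
noncomputable def matchNum (G : SimpleGraph V) [Fintype V] : ℕ :=
  sSup {n : ℕ | ∃ M : Finset (Sym2 V), IsMatchingSet G M ∧ M.card = n}

/-- A maximum matching of `G`. -/
def IsMaximumMatching (G : SimpleGraph V) [Fintype V] (M : Finset (Sym2 V)) : Prop :=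
  IsMatchingSet G M ∧ M.card = matchNum G

/-- A perfect matching of `G`: a matching covering every vertex. -/
def IsPerfectMatchingSet (G : SimpleGraph V) (M : Finset (Sym2 V)) : Prop :=
  IsMatchingSet G M ∧ ∀ v : V, ∃ e ∈ M, v ∈ e

/-- A pendant vertex: a vertex of degree one. -/
def IsPendant (G : SimpleGraph V) (v : V) : Prop :=
  (G.neighborSet v).ncard = 1

/-- A set `D` is 2-dominating: every vertex outside `D` has at least two
neighbors in `D`. -/
def Is2Dominating (G : SimpleGraph V) (D : Finset V) : Prop :=
  ∀ v : V, v ∉ D → 2 ≤ ({u : V | u ∈ D ∧ G.Adj v u}).ncard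

/-- A chordal graph: no induced cycle on four or more vertices. -/
def IsChordal (G : SimpleGraph V) : Prop :=
  ∀ n : ℕ, 4 ≤ n → IsEmpty (SimpleGraph.cycleGraph n ↪g G)

/-- A bipartite graph: the vertex set is partitioned into two stable sets. -/
def IsBipartiteGr (G : SimpleGraph V) [Fintype V] [DecidableEq V] : Prop :=
  ∃ C : Finset V, IsStableSet G C ∧ IsStableSet G Cᶜ

/-- A strong unique independence graph: a graph with a unique stability system
whose complement is also stable. -/
def IsStrongUniqueIndep (G : SimpleGraph V) [Fintype V] [DecidableEq V] : Prop :=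
  ∃ S : Finset V, IsStabSystem G S ∧ (∀ S' : Finset V, IsStabSystem G S' → S' = S) ∧
    IsStableSet G Sᶜ

/-- A bistable bipartite graph: its two color classes are its only two
stability systems. -/
def IsBistable (G : SimpleGraph V) [Fintype V] [DecidableEq V] : Prop :=
  ∃ A : Finset V, IsStableSet G A ∧ IsStableSet G Aᶜ ∧
    IsStabSystem G A ∧ IsStabSystem G Aᶜ ∧ A ≠ Aᶜ ∧
    ∀ S : Finset V, IsStabSystem G S → S = A ∨ S = Aᶜ

/-- A vertex cover of `G`. -/
def IsVertexCover (G : SimpleGraph V) (C : Finset V) : Prop :=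
  ∀ u v : V, G.Adj u v → u ∈ C ∨ v ∈ C

/-- A minimum vertex cover of `G`. -/
def IsMinVertexCover (G : SimpleGraph V) [Fintype V] (C : Finset V) : Prop :=
  IsVertexCover G C ∧ ∀ C' : Finset V, IsVertexCover G C' → C.card ≤ C'.card

section Aux

lemma isStableSet_mono {G : SimpleGraph V} {S T : Finset V} (h : S ⊆ T)
    (hT : IsStableSet G T) : IsStableSet G S :=
  fun u hu v hv => hT u (h hu) v (h hv)

-- helper Fin sub lemmas
lemma fin_sub_val_succ {M : ℕ} (u v : Fin M) (h : (u : ℕ) = (v : ℕ) + 1) :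
    ((u - v : Fin M) : ℕ) = 1 := by
  rw [Fin.sub_def]
  have hv := v.isLt
  have hu := u.isLt
  simp only
  have h2 : (M - (v:ℕ)) + (u:ℕ) = M + 1 := by omega
  rw [h2, Nat.add_mod_left]
  exact Nat.mod_eq_of_lt (by omega)

lemma fin_sub_val_wrap {M : ℕ} (hM : 2 ≤ M) (u v : Fin M) (h0 : (u : ℕ) = 0) (h1 : (v : ℕ) = M - 1) :
    ((u - v : Fin M) : ℕ) = 1 := by
  rw [Fin.sub_def]
  have hv := v.isLt
  simp only
  have h2 : (M - (v:ℕ)) + (u:ℕ) = 1 := by omega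
  rw [h2]
  exact Nat.mod_eq_of_lt (by omega)

lemma fin_sub_val_eq_one {M : ℕ} (u v : Fin M) (h : ((u - v : Fin M) : ℕ) = 1) :
    (u : ℕ) = (v : ℕ) + 1 ∨ ((u : ℕ) = 0 ∧ (v : ℕ) = M - 1) := by
  rw [Fin.sub_def] at h
  simp only at h
  have hv := v.isLt
  have hu := u.isLt
  set t := (M - (v:ℕ)) + (u:ℕ) with ht
  rcases Nat.lt_or_ge t M with hlt | hge
  · rw [Nat.mod_eq_of_lt hlt] at h
    right; omega
  · rw [Nat.mod_eq_sub_mod hge, Nat.mod_eq_of_lt (by omega)] at h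
    left; omega


def PathOn (G : SimpleGraph V) (W : Finset V) (n : ℕ) : Prop :=
  ∃ f : Fin n → V, (∀ i, f i ∈ W) ∧ Function.Injective f ∧
    ∀ (i : ℕ) (h : i + 1 < n), G.Adj (f ⟨i, Nat.lt_of_succ_lt h⟩) (f ⟨i+1, h⟩)

def CycOn (G : SimpleGraph V) (W : Finset V) (m : ℕ) : Prop :=
  ∃ (_ : 3 ≤ m) (g : Fin m → V), (∀ i, g i ∈ W) ∧
    Function.Injective g ∧
    (∀ (i : ℕ) (h : i + 1 < m), G.Adj (g ⟨i, Nat.lt_of_succ_lt h⟩) (g ⟨i+1, h⟩)) ∧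
    G.Adj (g ⟨m - 1, by omega⟩) (g ⟨0, by omega⟩)


lemma exists_max_of_bdd (Q : ℕ → Prop) (h0 : ∃ n, Q n) (b : ℕ) (hb : ∀ n, Q n → n ≤ b) :
    ∃ N, Q N ∧ ∀ m, Q m → m ≤ N := by
  obtain ⟨n, hn⟩ := h0
  have hbdd : BddAbove {n | Q n} := ⟨b, fun m hm => hb m hm⟩
  refine ⟨sSup {n | Q n}, Nat.sSup_mem ⟨n, hn⟩ hbdd, fun m hm => le_csSup hbdd hm⟩

lemma exists_min_nat (Q : ℕ → Prop) (h0 : ∃ n, Q n) :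
    ∃ N, Q N ∧ ∀ m, m < N → ¬ Q m := by
  refine ⟨sInf {n | Q n}, Nat.sInf_mem h0, fun m hm => Nat.notMem_of_lt_sInf hm⟩

set_option maxHeartbeats 1000000 in
open scoped Classical in
lemma core_no_min_degree_two {G : SimpleGraph V} [Fintype V] (hch : IsChordal G)
    (A B : Finset V) (hAB : Disjoint A B) (hA : IsStableSet G A) (hB : IsStableSet G B)
    (hdeg : ∀ x ∈ A ∪ B, 2 ≤ ((A ∪ B).filter (G.Adj x)).card)
    (hne : (A ∪ B).Nonempty) : False := by
  classical
  set W := A ∪ B with hW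
  have hcross : ∀ x ∈ W, ∀ y ∈ W, G.Adj x y → (x ∈ A ↔ y ∉ A) := by
    intro x hx y hy hadj
    constructor
    · intro hxA hyA
      exact hA x hxA y hyA hadj
    · intro hyA
      rcases Finset.mem_union.1 hx with h | h
      · exact h
      · rcases Finset.mem_union.1 hy with h' | h'
        · exact absurd h' hyA
        · exact absurd hadj (hB x h y h')
  -- paths
  have hP2 : PathOn G W 2 := by
    obtain ⟨x, hx⟩ := hne
    have h2 := hdeg x hx
    have hfil : (W.filter (G.Adj x)).Nonempty := by
      rw [← Finset.card_pos]; omega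
    obtain ⟨y, hy⟩ := hfil
    rw [Finset.mem_filter] at hy
    refine ⟨fun i => if (i : ℕ) = 0 then x else y, fun i => ?_, ?_, ?_⟩
    · by_cases h : (i : ℕ) = 0 <;> simp [h, hx, hy.1]
    · intro a b hab
      have hxy : x ≠ y := hy.2.ne
      by_cases ha : (a : ℕ) = 0 <;> by_cases hb : (b : ℕ) = 0 <;>
        simp [ha, hb] at hab ⊢ <;> first
          | (exact Fin.ext (by omega))
          | (exact absurd hab hxy)
          | (exact absurd hab.symm hxy)
    · intro i h
      have hi : i = 0 := by omega
      subst hi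
      simpa using hy.2
  obtain ⟨N, hN, hNmax⟩ := exists_max_of_bdd (PathOn G W) ⟨2, hP2⟩ (Fintype.card V)
    (fun n hn => by obtain ⟨f, _, hinj, _⟩ := hn; simpa using Fintype.card_le_of_injective f hinj)
  have hN2 : 2 ≤ N := hNmax 2 hP2
  obtain ⟨f, hfW, hfinj, hfadj⟩ := hN
  have hnotP : ¬ PathOn G W (N + 1) := fun h => by have := hNmax _ h; omega
  set last : Fin N := ⟨N - 1, by omega⟩ with hlastdef
  have hrange : ∀ y, y ∈ W → G.Adj (f last) y → ∃ j : Fin N, f j = y := by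
    intro y hyW hadj
    by_contra hno
    push_neg at hno
    apply hnotP
    refine ⟨fun i : Fin (N+1) => if h : (i : ℕ) < N then f ⟨(i : ℕ), h⟩ else y, fun i => ?_, ?_, ?_⟩
    · by_cases h : (i : ℕ) < N
      · simp only [dif_pos h]; exact hfW _
      · simp only [dif_neg h]; exact hyW
    · intro a b hab
      by_cases ha : (a : ℕ) < N <;> by_cases hb : (b : ℕ) < N <;>
        simp only [dif_pos, dif_neg, ha, hb] at hab
      · exact Fin.ext (by simpa [Fin.ext_iff] using hfinj hab)
      · exact absurd hab (hno _)
      · exact absurd hab.symm (hno _)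
      · exact Fin.ext (by have := a.isLt; have := b.isLt; omega)
    · intro i h
      by_cases h2 : i + 1 < N
      · have h1 : i < N := by omega
        simp only [dif_pos h1, dif_pos h2]
        exact hfadj i h2
      · have h1 : i < N := by omega
        have h3 : ¬ (i + 1 < N) := h2
        simp only [dif_pos h1, dif_neg h3]
        have : (⟨i, h1⟩ : Fin N) = last := Fin.ext (by simp [hlastdef]; omega)
        rw [this]
        exact hadj
  -- there are at least two neighbours of f last, all on the path
  set J : Finset (Fin N) := Finset.univ.filter (fun j => G.Adj (f last) (f j)) with hJdef
  have hJ2 : 2 ≤ J.card := by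
    have hsub : W.filter (G.Adj (f last)) ⊆ J.image f := by
      intro y hy
      rw [Finset.mem_filter] at hy
      obtain ⟨j, rfl⟩ := hrange y hy.1 hy.2
      exact Finset.mem_image_of_mem f (by simp [hJdef, hy.2])
    have h1 := hdeg (f last) (hfW last)
    calc 2 ≤ (W.filter (G.Adj (f last))).card := h1
      _ ≤ (J.image f).card := Finset.card_le_card hsub
      _ = J.card := Finset.card_image_of_injective J hfinj
  obtain ⟨j1, hj1, j2, hj2, hj12⟩ := Finset.one_lt_card.1 hJ2
  set n2 : Fin N := ⟨N - 2, by omega⟩ with hn2def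
  set j : Fin N := if j1 = n2 then j2 else j1 with hjdef
  have hjJ : j ∈ J := by
    by_cases h : j1 = n2 <;> simp [hjdef, h, hj1, hj2]
  have hjn2 : j ≠ n2 := by
    by_cases h : j1 = n2
    · simp only [hjdef, if_pos h]
      exact fun hh => hj12 (h.trans hh.symm)
    · simp only [hjdef, if_neg h]
      exact h
  have hadjj : G.Adj (f last) (f j) := by
    have := Finset.mem_filter.1 hjJ
    exact this.2
  have hjlast : j ≠ last := by
    intro h
    rw [h] at hadjj
    exact hadjj.ne rfl
  have hjval : (j : ℕ) < N - 2 := by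
    have h1 : (j : ℕ) ≠ N - 1 := fun h => hjlast (Fin.ext (by simp [hlastdef, h]))
    have h2 : (j : ℕ) ≠ N - 2 := fun h => hjn2 (Fin.ext (by simp [hn2def, h]))
    have := j.isLt
    omega
  -- cycles
  have hCyex : ∃ m, CycOn G W m := by
    refine ⟨N - (j : ℕ), by omega, fun k => f ⟨(j : ℕ) + (k : ℕ), by omega⟩, fun k => hfW _,
      ?_, ?_, ?_⟩
    · intro a b hab
      have := hfinj hab
      rw [Fin.ext_iff] at this ⊢
      simp only at this
      omega
    · intro i h
      exact hfadj ((j : ℕ) + i) (by omega)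
    · convert hadjj using 2 <;> (apply Fin.ext; simp [hlastdef] <;> omega)
  obtain ⟨M, hMspec, hmin⟩ := exists_min_nat (CycOn G W) hCyex
  obtain ⟨hM3, g, hgW, hginj, hgadj, hgclose⟩ := hMspec
  -- chordless
  have hchord : ∀ (a b : ℕ) (ha : a < M) (hb : b < M), a + 2 ≤ b → ¬(a = 0 ∧ b = M - 1) →
      ¬ G.Adj (g ⟨a, ha⟩) (g ⟨b, hb⟩) := by
    intro a b ha hb hsep hwrap hadj
    apply hmin (b - a + 1) (by omega)
    refine ⟨by omega, fun k => g ⟨a + (k : ℕ), by omega⟩, fun k => hgW _, ?_, ?_, ?_⟩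
    · intro s t hst
      have := hginj hst
      rw [Fin.ext_iff] at this ⊢
      simp only at this
      omega
    · intro i h
      exact hgadj (a + i) (by omega)
    · convert hadj.symm using 2 <;> (apply Fin.ext; simp <;> omega)
  -- parity
  have hpar : ∀ (i : ℕ) (hi : i < M), (g ⟨i, hi⟩ ∈ A ↔ (g ⟨0, by omega⟩ ∈ A ↔ Even i)) := by
    intro i
    induction i with
    | zero => intro hi; simp
    | succ k ih =>
      intro hi
      have hk := ih (by omega)
      have hadj := hgadj k hi
      have hc := hcross _ (hgW ⟨k, by omega⟩) _ (hgW ⟨k+1, hi⟩) hadj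
      rw [Nat.even_add_one]
      tauto
  have hoddM : ¬ Even (M - 1) := by
    have hlastc := hcross _ (hgW ⟨M - 1, by omega⟩) _ (hgW ⟨0, by omega⟩) hgclose
    have h1 := hpar (M - 1) (by omega)
    by_cases hg0 : g ⟨0, by omega⟩ ∈ A <;> tauto
  have hMeven : Even M := by
    rcases Nat.even_or_odd M with h | h
    · exact h
    · exfalso
      obtain ⟨c, rfl⟩ := h
      exact hoddM (by simpa using even_two_mul c)
  have hM4 : 4 ≤ M := by
    obtain ⟨c, rfl⟩ := hMeven
    omega
  -- build the embedding
  refine (hch M hM4).false ⟨⟨g, hginj⟩, ?_⟩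
  intro a b
  rw [SimpleGraph.cycleGraph_adj']
  simp only [Function.Embedding.coeFn_mk]
  constructor
  · intro hadj
    have hne' : (a : ℕ) ≠ (b : ℕ) := by
      intro h
      exact hadj.ne (congrArg g (Fin.ext h))
    rcases Nat.lt_or_ge (a : ℕ) (b : ℕ) with hlt | hge
    · by_cases hc : (a : ℕ) + 1 = (b : ℕ)
      · right
        exact fin_sub_val_succ b a hc.symm
      · by_cases hw : (a : ℕ) = 0 ∧ (b : ℕ) = M - 1
        · left
          exact fin_sub_val_wrap (by omega) a b hw.1 hw.2
        · exact absurd hadj (hchord (a : ℕ) (b : ℕ) a.isLt b.isLt (by omega) hw)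
    · have hlt : (b : ℕ) < (a : ℕ) := by omega
      by_cases hc : (b : ℕ) + 1 = (a : ℕ)
      · left
        exact fin_sub_val_succ a b hc.symm
      · by_cases hw : (b : ℕ) = 0 ∧ (a : ℕ) = M - 1
        · right
          exact fin_sub_val_wrap (by omega) b a hw.1 hw.2
        · exact absurd hadj.symm (hchord (b : ℕ) (a : ℕ) b.isLt a.isLt (by omega) hw)
  · intro h
    have step : ∀ u v : Fin M, ((u - v : Fin M) : ℕ) = 1 → G.Adj (g u) (g v) := by
      intro u v huv
      rcases fin_sub_val_eq_one u v huv with h1 | h1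
      · have hv1 : (v : ℕ) + 1 < M := by rw [← h1]; exact u.isLt
        have := hgadj (v : ℕ) hv1
        have eu : (⟨(v : ℕ) + 1, hv1⟩ : Fin M) = u := Fin.ext (by simp [h1])
        have ev : (⟨(v : ℕ), Nat.lt_of_succ_lt hv1⟩ : Fin M) = v := Fin.ext rfl
        rw [eu, ev] at this
        exact this.symm
      · have eu : (⟨0, by omega⟩ : Fin M) = u := Fin.ext (by simp [h1.1])
        have ev : (⟨M - 1, by omega⟩ : Fin M) = v := Fin.ext (by simp [h1.2])
        rw [eu, ev] at hgclose
        exact hgclose.symm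
    rcases h with h | h
    · exact step a b h
    · exact (step b a h).symm

open scoped Classical in
lemma filter_stable_subset {G : SimpleGraph V} {A B : Finset V} (hA : IsStableSet G A)
    {x : V} (hx : x ∈ A) : (A ∪ B).filter (G.Adj x) ⊆ B.filter (G.Adj x) := by
  intro y hy
  rw [Finset.mem_filter] at hy ⊢
  refine ⟨?_, hy.2⟩
  rcases Finset.mem_union.1 hy.1 with h | h
  · exact absurd hy.2 (hA x hx y h)
  · exact h

open scoped Classical in
lemma edge_bound {G : SimpleGraph V} [Fintype V] (hch : IsChordal G) :
    ∀ (n : ℕ) (A B : Finset V), A.card + B.card ≤ n → Disjoint A B →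
      IsStableSet G A → IsStableSet G B → (A ∪ B).Nonempty →
      (∑ a ∈ A, (B.filter (G.Adj a)).card) < A.card + B.card := by
  intro n
  induction n with
  | zero =>
    intro A B hc _ _ _ hne
    exfalso
    obtain ⟨x, hx⟩ := hne
    rcases Finset.mem_union.1 hx with h | h
    · have := Finset.card_pos.2 ⟨x, h⟩; omega
    · have := Finset.card_pos.2 ⟨x, h⟩; omega
  | succ n ih =>
    intro A B hc hAB hA hB hne
    by_cases hall : ∀ x ∈ A ∪ B, 2 ≤ ((A ∪ B).filter (G.Adj x)).card
    · exact (core_no_min_degree_two hch A B hAB hA hB hall hne).elim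
    · push_neg at hall
      obtain ⟨x, hxW, hxd⟩ := hall
      rcases Finset.mem_union.1 hxW with hxA | hxB
      · -- x ∈ A : remove x from A
        have hxle : (B.filter (G.Adj x)).card ≤ 1 :=
          le_trans (Finset.card_le_card (show B.filter (G.Adj x) ⊆ (A ∪ B).filter (G.Adj x) by
            intro y hy
            rw [Finset.mem_filter] at hy ⊢
            exact ⟨Finset.mem_union_right _ hy.1, hy.2⟩)) (by omega)
        have hsplit : ∑ a ∈ A, (B.filter (G.Adj a)).card
            = (∑ a ∈ A.erase x, (B.filter (G.Adj a)).card) + (B.filter (G.Adj x)).card :=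
          (Finset.sum_erase_add A _ hxA).symm
        have hcA : A.card = (A.erase x).card + 1 := by
          rw [Finset.card_erase_of_mem hxA]
          have := Finset.card_pos.2 ⟨x, hxA⟩
          omega
        by_cases hne' : ((A.erase x) ∪ B).Nonempty
        · have hih := ih (A.erase x) B (by omega)
            (Finset.disjoint_of_subset_left (Finset.erase_subset _ _) hAB)
            (isStableSet_mono (Finset.erase_subset _ _) hA) hB hne'
          omega
        · rw [Finset.not_nonempty_iff_eq_empty, Finset.union_eq_empty] at hne'
          have hB0 : B = ∅ := hne'.2
          have : ∑ a ∈ A, (B.filter (G.Adj a)).card = 0 := by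
            apply Finset.sum_eq_zero
            intro a _
            simp [hB0]
          have := Finset.card_pos.2 ⟨x, hxA⟩
          omega
      · -- x ∈ B : remove x from B
        have hxle : (A.filter (fun a => G.Adj a x)).card ≤ 1 :=
          le_trans (Finset.card_le_card
            (show A.filter (fun a => G.Adj a x) ⊆ (A ∪ B).filter (G.Adj x) by
            intro y hy
            rw [Finset.mem_filter] at hy ⊢
            exact ⟨Finset.mem_union_left _ hy.1, hy.2.symm⟩)) (by omega)
        have hsplit : ∀ a ∈ A, (B.filter (G.Adj a)).card
            ≤ ((B.erase x).filter (G.Adj a)).card + (if G.Adj a x then 1 else 0) := by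
          intro a _
          by_cases hax : G.Adj a x
          · rw [if_pos hax]
            refine le_trans (Finset.card_le_card (?_ :
              B.filter (G.Adj a) ⊆ insert x ((B.erase x).filter (G.Adj a)))) ?_
            · intro y hy
              rw [Finset.mem_filter] at hy
              rcases eq_or_ne y x with rfl | hne''
              · exact Finset.mem_insert_self _ _
              · exact Finset.mem_insert_of_mem (Finset.mem_filter.2
                  ⟨Finset.mem_erase.2 ⟨hne'', hy.1⟩, hy.2⟩)
            · exact le_trans (Finset.card_insert_le _ _) le_rfl
          · rw [if_neg hax]
            simp only [Nat.add_zero]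
            apply Finset.card_le_card
            intro y hy
            rw [Finset.mem_filter] at hy ⊢
            have hyx : y ≠ x := fun h => hax (h ▸ hy.2)
            exact ⟨Finset.mem_erase.2 ⟨hyx, hy.1⟩, hy.2⟩
        have hsum : ∑ a ∈ A, (B.filter (G.Adj a)).card
            ≤ (∑ a ∈ A, ((B.erase x).filter (G.Adj a)).card)
              + (A.filter (fun a => G.Adj a x)).card := by
          calc ∑ a ∈ A, (B.filter (G.Adj a)).card
              ≤ ∑ a ∈ A, (((B.erase x).filter (G.Adj a)).card + (if G.Adj a x then 1 else 0)) :=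
                Finset.sum_le_sum hsplit
            _ = _ := by rw [Finset.sum_add_distrib, Finset.card_filter]
        have hcB : B.card = (B.erase x).card + 1 := by
          rw [Finset.card_erase_of_mem hxB]
          have := Finset.card_pos.2 ⟨x, hxB⟩
          omega
        by_cases hne' : (A ∪ B.erase x).Nonempty
        · have hih := ih A (B.erase x) (by omega)
            (Finset.disjoint_of_subset_right (Finset.erase_subset _ _) hAB)
            hA (isStableSet_mono (Finset.erase_subset _ _) hB) hne'
          omega
        · rw [Finset.not_nonempty_iff_eq_empty, Finset.union_eq_empty] at hne'
          have hA0 : A = ∅ := hne'.1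
          have h0 : ∑ a ∈ A, (B.filter (G.Adj a)).card = 0 := by simp [hA0]
          have := Finset.card_pos.2 ⟨x, hxB⟩
          omega

lemma stabSet_bdd (G : SimpleGraph V) [Fintype V] :
    BddAbove {n : ℕ | ∃ S : Finset V, IsStableSet G S ∧ S.card = n} := by
  refine ⟨Fintype.card V, fun n hn => ?_⟩
  obtain ⟨S, _, rfl⟩ := hn
  simpa using S.card_le_univ

lemma card_le_stabNum (G : SimpleGraph V) [Fintype V] {S : Finset V}
    (hS : IsStableSet G S) : S.card ≤ stabNum G :=
  le_csSup (stabSet_bdd G) ⟨S, hS, rfl⟩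

lemma exists_stabSystem (G : SimpleGraph V) [Fintype V] :
    ∃ S : Finset V, IsStabSystem G S := by
  have hmem : stabNum G ∈ {n : ℕ | ∃ S : Finset V, IsStableSet G S ∧ S.card = n} :=
    Nat.sSup_mem ⟨0, ∅, fun u hu => by simp at hu, by simp⟩ (stabSet_bdd G)
  obtain ⟨S, hS, hc⟩ := hmem
  exact ⟨S, hS, hc⟩

lemma isStableSet_deleteEdges {G : SimpleGraph V} {s : Set (Sym2 V)} {S : Finset V}
    (hS : IsStableSet G S) : IsStableSet (G.deleteEdges s) S :=
  fun u hu v hv hadj => hS u hu v hv hadj.1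

lemma stabNum_le_deleteEdges (G : SimpleGraph V) [Fintype V] (s : Set (Sym2 V)) :
    stabNum G ≤ stabNum (G.deleteEdges s) := by
  obtain ⟨S, hS, hc⟩ := exists_stabSystem G
  calc stabNum G = S.card := hc.symm
    _ ≤ _ := card_le_stabNum _ (isStableSet_deleteEdges hS)

open scoped Classical in
/-- Stable sets of `T \ S` / `S \ T` basic facts. -/
lemma diff_facts {G : SimpleGraph V} [Fintype V] {S T : Finset V}
    (hS : IsStabSystem G S) (hT : IsStabSystem G T) (hne : T ≠ S) :
    (T \ S).Nonempty ∧ (S \ T).Nonempty ∧ (T \ S).card = (S \ T).card ∧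
      Disjoint (T \ S) (S \ T) ∧ IsStableSet G (T \ S) ∧ IsStableSet G (S \ T) := by
  have hcard : T.card = S.card := by rw [hS.2, hT.2]
  have h1 : (T \ S).Nonempty := by
    rw [Finset.sdiff_nonempty]
    intro hsub
    exact hne (Finset.eq_of_subset_of_card_le hsub (by omega))
  have h2 : (S \ T).Nonempty := by
    rw [Finset.sdiff_nonempty]
    intro hsub
    exact hne ((Finset.eq_of_subset_of_card_le hsub (by omega)).symm)
  exact ⟨h1, h2, Finset.card_sdiff_comm hcard, disjoint_sdiff_sdiff,
    isStableSet_mono (Finset.sdiff_subset) hT.1, isStableSet_mono (Finset.sdiff_subset) hS.1⟩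

open scoped Classical in
lemma neighbors_in_diff {G : SimpleGraph V} [Fintype V] {S T : Finset V}
    (hT : IsStableSet G T) {x : V} (hx1 : x ∈ T) :
    S.filter (G.Adj x) ⊆ (S \ T).filter (G.Adj x) := by
  intro y hy
  rw [Finset.mem_filter] at hy ⊢
  exact ⟨Finset.mem_sdiff.2 ⟨hy.1, fun hyT => hT x hx1 y hyT hy.2⟩, hy.2⟩

open scoped Classical in
lemma exists_neighbor_in_stabSystem {G : SimpleGraph V} [Fintype V] {S : Finset V}
    (hS : IsStabSystem G S) {x : V} (hx : x ∉ S) :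
    (S.filter (G.Adj x)).Nonempty := by
  by_contra h
  rw [Finset.not_nonempty_iff_eq_empty] at h
  have hstab : IsStableSet G (insert x S) := by
    intro u hu v hv hadj
    rcases Finset.mem_insert.1 hu with rfl | hu' <;> rcases Finset.mem_insert.1 hv with rfl | hv'
    · exact hadj.ne rfl
    · have : v ∈ S.filter (G.Adj u) := Finset.mem_filter.2 ⟨hv', hadj⟩
      rw [h] at this
      exact absurd this (Finset.notMem_empty v)
    · have : u ∈ S.filter (G.Adj v) := Finset.mem_filter.2 ⟨hu', hadj.symm⟩
      rw [h] at this
      exact absurd this (Finset.notMem_empty u)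
    · exact hS.1 u hu' v hv' hadj
  have hle := card_le_stabNum G hstab
  rw [Finset.card_insert_of_notMem hx, hS.2] at hle
  omega

open scoped Classical in
lemma stable_insert_deleteEdges {G : SimpleGraph V} {S : Finset V} (hS : IsStableSet G S)
    {x y : V} (hyS : ∀ s ∈ S, G.Adj x s → s = y) (hxS : x ∉ S) :
    IsStableSet (G.deleteEdges {s(x, y)}) (insert x S) := by
  intro u hu v hv hadj
  rw [SimpleGraph.deleteEdges_adj, Set.mem_singleton_iff] at hadj
  obtain ⟨hGadj, hne⟩ := hadj
  rcases Finset.mem_insert.1 hu with rfl | hu' <;> rcases Finset.mem_insert.1 hv with rfl | hv'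
  · exact hGadj.ne rfl
  · exact hne (by rw [hyS v hv' hGadj])
  · exact hne (by rw [hyS u hu' hGadj.symm, Sym2.eq_swap])
  · exact hS u hu' v hv' hGadj

open scoped Classical in
lemma helper_key {G : SimpleGraph V} [Fintype V] (h1 : AlphaMinusStable G) {S T : Finset V}
    (hS : IsStabSystem G S) (hT : IsStabSystem G T) {x : V} (hx : x ∈ T \ S)
    (hcard : ((S \ T).filter (G.Adj x)).card ≤ 1) : False := by
  obtain ⟨hx1, hx2⟩ := Finset.mem_sdiff.1 hx
  have hsub := neighbors_in_diff (S := S) hT.1 hx1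
  have hne := exists_neighbor_in_stabSystem hS hx2
  have hle1 : (S.filter (G.Adj x)).card ≤ 1 := le_trans (Finset.card_le_card hsub) hcard
  obtain ⟨y, hy⟩ := hne
  have huniq : ∀ s ∈ S, G.Adj x s → s = y := by
    intro s hs hadj
    by_contra hne'
    have h2 : 2 ≤ (S.filter (G.Adj x)).card :=
      Finset.one_lt_card.2 ⟨s, Finset.mem_filter.2 ⟨hs, hadj⟩, y, hy, hne'⟩
    omega
  rw [Finset.mem_filter] at hy
  have hstab2 := stable_insert_deleteEdges hS.1 huniq hx2
  have hle := card_le_stabNum (G.deleteEdges {s(x, y)}) hstab2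
  rw [Finset.card_insert_of_notMem hx2, h1 x y hy.2, hS.2] at hle
  omega

open scoped Classical in
lemma unique_of_alphaMinus {G : SimpleGraph V} [Fintype V] (hch : IsChordal G)
    (h1 : AlphaMinusStable G) {S T : Finset V} (hS : IsStabSystem G S)
    (hT : IsStabSystem G T) : T = S := by
  by_contra hne
  obtain ⟨hAne, hBne, hcards, hd, hA, hB⟩ := diff_facts hS hT hne
  have hnot : ¬ ∀ x ∈ (T \ S) ∪ (S \ T), 2 ≤ (((T \ S) ∪ (S \ T)).filter (G.Adj x)).card :=
    fun hall => core_no_min_degree_two hch _ _ hd hA hB hall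
      (Finset.Nonempty.mono Finset.subset_union_left hAne)
  push_neg at hnot
  obtain ⟨x, hxW, hxlt⟩ := hnot
  rcases Finset.mem_union.1 hxW with hxA | hxB
  · refine helper_key h1 hS hT hxA ?_
    have := Finset.card_le_card (Finset.filter_subset_filter (G.Adj x)
      (Finset.subset_union_right (s₁ := T \ S) (s₂ := S \ T)))
    omega
  · refine helper_key h1 hT hS hxB ?_
    have := Finset.card_le_card (Finset.filter_subset_filter (G.Adj x)
      (Finset.subset_union_left (s₁ := T \ S) (s₂ := S \ T)))
    omega

open scoped Classical in
lemma unique_of_2dom {G : SimpleGraph V} [Fintype V] (hch : IsChordal G) {S : Finset V}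
    (hS : IsStabSystem G S) (hdom : Is2Dominating G S) {T : Finset V}
    (hT : IsStabSystem G T) : T = S := by
  by_contra hne
  obtain ⟨hAne, hBne, hcards, hd, hA, hB⟩ := diff_facts hS hT hne
  have hdeg : ∀ a ∈ T \ S, 2 ≤ (((S \ T)).filter (G.Adj a)).card := by
    intro a ha
    obtain ⟨ha1, ha2⟩ := Finset.mem_sdiff.1 ha
    have h2 := hdom a ha2
    have hset : {u : V | u ∈ S ∧ G.Adj a u} = ↑(S.filter (G.Adj a)) := by
      ext u; simp [Finset.mem_filter]
    rw [hset, Set.ncard_coe_finset] at h2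
    exact le_trans h2 (Finset.card_le_card (neighbors_in_diff hT.1 ha1))
  have hsum : 2 * (T \ S).card ≤ ∑ a ∈ T \ S, (((S \ T)).filter (G.Adj a)).card := by
    calc 2 * (T \ S).card = ∑ _a ∈ T \ S, 2 := by
          rw [Finset.sum_const, smul_eq_mul, mul_comm]
      _ ≤ _ := Finset.sum_le_sum hdeg
  have hEB := edge_bound hch ((T \ S).card + (S \ T).card) (T \ S) (S \ T) le_rfl hd hA hB
    (Finset.Nonempty.mono Finset.subset_union_left hAne)
  have hApos := Finset.card_pos.2 hAne
  omega

open scoped Classical in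
lemma alphaMinus_of_unique {G : SimpleGraph V} [Fintype V]
    (hu : ∃! S : Finset V, IsStabSystem G S) : AlphaMinusStable G := by
  intro u v huv
  refine le_antisymm ?_ (stabNum_le_deleteEdges G _)
  obtain ⟨T, hT, hTc⟩ := exists_stabSystem (G.deleteEdges {s(u, v)})
  rw [← hTc]
  by_cases huv' : u ∈ T ∧ v ∈ T
  · obtain ⟨S, hSsys, huniq⟩ := hu
    have h1 : IsStableSet G (T.erase u) := by
      intro a ha b hb hadj
      obtain ⟨ha1, ha2⟩ := Finset.mem_erase.1 ha
      obtain ⟨hb1, hb2⟩ := Finset.mem_erase.1 hb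
      apply hT a ha2 b hb2
      rw [SimpleGraph.deleteEdges_adj, Set.mem_singleton_iff]
      refine ⟨hadj, fun heq => ?_⟩
      rw [Sym2.eq_iff] at heq
      rcases heq with ⟨rfl, rfl⟩ | ⟨rfl, rfl⟩
      · exact ha1 rfl
      · exact hb1 rfl
    have h2 : IsStableSet G (T.erase v) := by
      intro a ha b hb hadj
      obtain ⟨ha1, ha2⟩ := Finset.mem_erase.1 ha
      obtain ⟨hb1, hb2⟩ := Finset.mem_erase.1 hb
      apply hT a ha2 b hb2
      rw [SimpleGraph.deleteEdges_adj, Set.mem_singleton_iff]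
      refine ⟨hadj, fun heq => ?_⟩
      rw [Sym2.eq_iff] at heq
      rcases heq with ⟨rfl, rfl⟩ | ⟨rfl, rfl⟩
      · exact hb1 rfl
      · exact ha1 rfl
    have hle1 := card_le_stabNum G h1
    have hle2 := card_le_stabNum G h2
    by_contra hgt
    push_neg at hgt
    have hcT : 0 < T.card := Finset.card_pos.2 ⟨u, huv'.1⟩
    have hc1 : (T.erase u).card = T.card - 1 := Finset.card_erase_of_mem huv'.1
    have hc2 : (T.erase v).card = T.card - 1 := Finset.card_erase_of_mem huv'.2
    have e1 : T.erase u = S := huniq _ ⟨h1, by omega⟩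
    have e2 : T.erase v = S := huniq _ ⟨h2, by omega⟩
    have hune : u ≠ v := huv.ne
    have : u ∈ T.erase v := Finset.mem_erase.2 ⟨hune, huv'.1⟩
    rw [e2, ← e1] at this
    exact (Finset.mem_erase.1 this).1 rfl
  · have hstab : IsStableSet G T := by
      intro a ha b hb hadj
      apply hT a ha b hb
      rw [SimpleGraph.deleteEdges_adj, Set.mem_singleton_iff]
      refine ⟨hadj, fun heq => ?_⟩
      rw [Sym2.eq_iff] at heq
      apply huv'
      rcases heq with ⟨rfl, rfl⟩ | ⟨rfl, rfl⟩
      · exact ⟨ha, hb⟩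
      · exact ⟨hb, ha⟩
    exact card_le_stabNum G hstab

open scoped Classical in
lemma twodom_of_unique {G : SimpleGraph V} [Fintype V]
    (hu : ∃! S : Finset V, IsStabSystem G S) :
    ∃ S : Finset V, IsStabSystem G S ∧ Is2Dominating G S := by
  obtain ⟨S, hSsys, huniq⟩ := hu
  refine ⟨S, hSsys, ?_⟩
  intro v hv
  have hset : {u : V | u ∈ S ∧ G.Adj v u} = ↑(S.filter (G.Adj v)) := by
    ext u; simp [Finset.mem_filter]
  rw [hset, Set.ncard_coe_finset]
  by_contra hlt
  push_neg at hlt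
  obtain ⟨y, hy⟩ := exists_neighbor_in_stabSystem hSsys hv
  rw [Finset.mem_filter] at hy
  have hstab : IsStableSet G (insert v (S.erase y)) := by
    intro a ha b hb hadj
    rcases Finset.mem_insert.1 ha with rfl | ha' <;> rcases Finset.mem_insert.1 hb with rfl | hb'
    · exact hadj.ne rfl
    · obtain ⟨hb1, hb2⟩ := Finset.mem_erase.1 hb'
      have h2 : 2 ≤ (S.filter (G.Adj a)).card :=
        Finset.one_lt_card.2 ⟨b, Finset.mem_filter.2 ⟨hb2, hadj⟩, y,
          Finset.mem_filter.2 hy, hb1⟩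
      omega
    · obtain ⟨ha1, ha2⟩ := Finset.mem_erase.1 ha'
      have h2 : 2 ≤ (S.filter (G.Adj b)).card :=
        Finset.one_lt_card.2 ⟨a, Finset.mem_filter.2 ⟨ha2, hadj.symm⟩, y,
          Finset.mem_filter.2 hy, ha1⟩
      omega
    · exact hSsys.1 a (Finset.mem_of_mem_erase ha') b (Finset.mem_of_mem_erase hb') hadj
  have hvS : v ∉ S.erase y := fun h => hv (Finset.mem_of_mem_erase h)
  have hcard : (insert v (S.erase y)).card = S.card := by
    rw [Finset.card_insert_of_notMem hvS, Finset.card_erase_of_mem hy.1]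
    have := Finset.card_pos.2 ⟨y, hy.1⟩
    omega
  have heq := huniq _ ⟨hstab, by rw [hcard, hSsys.2]⟩
  have hvin : v ∈ insert v (S.erase y) := Finset.mem_insert_self _ _
  rw [heq] at hvin
  exact hv hvin

end Aux

/-- For a chordal graph `G`, the following are equivalent:
(i) `G` is α⁻-stable; (ii) `G` has a stability system which is 2-dominating;
(iii) `G` has a unique stability system. -/
theorem stmt2 {V : Type*} [Fintype V] (G : SimpleGraph V) (hch : IsChordal G) :
    (AlphaMinusStable G ↔ ∃ S : Finset V, IsStabSystem G S ∧ Is2Dominating G S) ∧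
    (AlphaMinusStable G ↔ ∃! S : Finset V, IsStabSystem G S) := by
  have hP3ofP1 : AlphaMinusStable G → ∃! S : Finset V, IsStabSystem G S := by
    intro h1
    obtain ⟨S, hS⟩ := exists_stabSystem G
    exact ⟨S, hS, fun T hT => unique_of_alphaMinus hch h1 hS hT⟩
  have hP3ofP2 : (∃ S : Finset V, IsStabSystem G S ∧ Is2Dominating G S) →
      ∃! S : Finset V, IsStabSystem G S := by
    rintro ⟨S, hS, hdom⟩
    exact ⟨S, hS, fun T hT => unique_of_2dom hch hS hdom hT⟩
  refine ⟨⟨fun h1 => twodom_of_unique (hP3ofP1 h1), fun h2 => alphaMinus_of_unique (hP3ofP2 h2)⟩,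
    ⟨hP3ofP1, fun h3 => alphaMinus_of_unique h3⟩⟩
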